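/- Let (a,b) be a good pair with translation number λ and curvature angle φ, and for j ≥ 0 let x_j = λ^j·e^{iφ} ∈ ℍ². Then for all j ≥ 0, d(x_j, x_{j+1}) = a, and for all j ≥ 1, ⟨x_{j−1}, x_{j+1}⟩_{x_j} = b. -/

import Mathlib

open UpperHalfPlane Real Filter

/-- The tension of the chain `x 0, x 1, …, x n`:
`τ = Σ_{j=1}^{n−1} d(x_{j−1},x_{j+1}) − Σ_{j=2}^{n−1} d(x_{j−1},x_j) − d(x_0,x_n)`. -/
noncomputable def tension (n : ℕ) (x : ℕ → UpperHalfPlane) : ℝ :=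
  (∑ j ∈ Finset.range (n - 1), dist (x j) (x (j + 2)))
    - (∑ j ∈ Finset.range (n - 2), dist (x (j + 1)) (x (j + 2)))
    - dist (x 0) (x n)

/-- The Gromov product `⟨x,y⟩_z = (d(x,z)+d(z,y)−d(x,y))/2`. -/
noncomputable def gromov (x y z : UpperHalfPlane) : ℝ :=
  (dist x z + dist z y - dist x y) / 2

/-- A pair `(a,b)` is good if `a, b ≥ 0` and `sinh(a−b) > 2·sinh(a/2)`. -/
def GoodPair (a b : ℝ) : Prop :=
  0 ≤ a ∧ 0 ≤ b ∧ Real.sinh (a - b) > 2 * Real.sinh (a / 2)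

/-- The chain `x 0, …, x n` is `(a,b)`-good. -/
def GoodChain (a b : ℝ) (n : ℕ) (x : ℕ → UpperHalfPlane) : Prop :=
  (∀ j < n, dist (x (j + 1)) (x j) ≥ a) ∧
  (∀ j, 1 ≤ j → j + 1 ≤ n → gromov (x (j - 1)) (x (j + 1)) (x j) ≤ b)

/-- The chain `x_j = λ^j·e^{iφ}` (with `λ`, `φ` the translation number and curvature
angle of a good pair `(a,b)`) is `(a,b)`-canonical: consecutive distances equal `a`
and Gromov products equal `b`. -/
theorem canonical_chain_dist_and_gromov (a b lam φ : ℝ) (hab : GoodPair a b)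
    (hlam1 : 1 < lam)
    (hlam2 : Real.cosh (Real.log lam / 2) = Real.sinh (a - b) / (2 * Real.sinh (a / 2)))
    (hφ1 : 0 < φ) (hφ2 : φ ≤ π / 2)
    (hφ3 : Real.sinh (Real.log lam / 2) = Real.sin φ * Real.sinh (a / 2))
    (x : ℕ → UpperHalfPlane)
    (hx : ∀ j : ℕ, (x j : ℂ) = ((lam ^ j : ℝ) : ℂ) * Complex.exp (φ * Complex.I)) :
    (∀ j : ℕ, dist (x j) (x (j + 1)) = a) ∧
      (∀ j : ℕ, 1 ≤ j → gromov (x (j - 1)) (x (j + 1)) (x j) = b) := by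
  have hlam0 : (0 : ℝ) < lam := lt_trans one_pos hlam1
  set t := Real.log lam with ht_def
  have ht : 0 < t := Real.log_pos hlam1
  have hs : 0 < Real.sin φ :=
    Real.sin_pos_of_pos_of_lt_pi hφ1 (lt_of_le_of_lt hφ2 (by linarith [Real.pi_pos]))
  have hsa : 0 < Real.sinh (a / 2) := by
    rcases eq_or_lt_of_le ((Real.sinh_nonneg_iff (x := a / 2)).2 (by linarith [hab.1])) with h | h
    · exfalso
      rw [← h] at hlam2
      simp at hlam2
      linarith [Real.one_le_cosh (t / 2)]
    · exact h
  -- λ^j = exp (j * t)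
  have hpow : ∀ j : ℕ, lam ^ j = Real.exp (j * t) := by
    intro j
    rw [Real.exp_nat_mul, Real.exp_log hlam0]
  have him : ∀ j : ℕ, (x j).im = lam ^ j * Real.sin φ := by
    intro j
    rw [← UpperHalfPlane.coe_im, hx j, Complex.mul_im, Complex.exp_mul_I]
    simp [← Complex.ofReal_cos, ← Complex.ofReal_sin, ← Complex.ofReal_pow]
  -- general distance formula
  have hdist : ∀ j k : ℕ,
      dist (x j) (x (j + k)) = 2 * Real.arsinh (Real.sinh (k * t / 2) / Real.sin φ) := by
    intro j k
    rw [UpperHalfPlane.dist_eq]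
    congr 1
    have hE : ‖Complex.exp (↑φ * Complex.I)‖ = 1 :=
      Complex.norm_exp_ofReal_mul_I φ
    have hcd : dist ((x j : ℂ)) ((x (j + k) : ℂ)) = lam ^ (j + k) - lam ^ j := by
      rw [Complex.dist_eq, hx j, hx (j + k), ← sub_mul, norm_mul, hE, mul_one,
        ← Complex.ofReal_sub, Complex.norm_real, Real.norm_eq_abs,
        abs_of_nonpos (by nlinarith [pow_le_pow_right₀ (le_of_lt hlam1) (Nat.le_add_right j k)])]
      ring
    rw [hcd, him j, him (j + k), hpow, hpow]
    have e1 : Real.exp ((↑(j + k) : ℝ) * t) = Real.exp (j * t) * Real.exp (k * t / 2) * Real.exp (k * t / 2) := by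
      rw [← Real.exp_add, ← Real.exp_add]
      push_cast
      ring_nf
    have hsq : Real.sqrt (Real.exp (↑j * t) * Real.sin φ * (Real.exp ((↑(j + k) : ℝ) * t) * Real.sin φ))
        = Real.exp (j * t) * Real.exp (k * t / 2) * Real.sin φ := by
      rw [show Real.exp (↑j * t) * Real.sin φ * (Real.exp ((↑(j + k) : ℝ) * t) * Real.sin φ)
          = (Real.exp (j * t) * Real.exp (k * t / 2) * Real.sin φ) ^ 2 by rw [e1]; ring,
        Real.sqrt_sq (by positivity)]
    rw [hsq, e1, Real.sinh_eq, Real.exp_neg]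
    have h2 := Real.exp_pos (j * t)
    have h3 := Real.exp_pos (k * t / 2)
    field_simp
  -- key hyperbolic identities
  have hhalf : Real.sinh (t / 2) / Real.sin φ = Real.sinh (a / 2) := by
    rw [hφ3]; field_simp
  have hfull : Real.sinh t / Real.sin φ = Real.sinh (a - b) := by
    have h2 : Real.sinh t = 2 * Real.sinh (t / 2) * Real.cosh (t / 2) := by
      rw [← Real.sinh_two_mul]; ring_nf
    rw [h2, hφ3, hlam2]
    field_simp
  have hd1 : ∀ j : ℕ, dist (x j) (x (j + 1)) = a := by
    intro j
    rw [hdist j 1, Nat.cast_one, one_mul, hhalf, Real.arsinh_sinh]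
    ring
  refine ⟨hd1, fun j hj => ?_⟩
  have hd2 : dist (x (j - 1)) (x (j + 1)) = 2 * (a - b) := by
    have := hdist (j - 1) 2
    rw [show j - 1 + 2 = j + 1 by omega] at this
    rw [this, show ((2 : ℕ) : ℝ) * t / 2 = t by push_cast; ring, hfull, Real.arsinh_sinh]
  have hd0 : dist (x (j - 1)) (x j) = a := by
    have := hd1 (j - 1)
    rwa [show j - 1 + 1 = j by omega] at this
  rw [gromov, hd0, hd2, hd1 j]
  ring
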